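/- If all players other than i play a correlated punishment strategy against i in every round of the infinitely repeated game (independently across rounds), then for any strategy of player i, player i's normalized discounted expected payoff is at most his minimax value mm_i(G). -/

import Mathlib

lemma sum_prod_weights {B : Type} [Fintype B] (σ : B → ℝ) (hσ1 : ∑ b, σ b = 1) :
    ∀ t : ℕ, ∑ h : Fin t → B, ∏ k, σ (h k) = 1 := by
  intro t
  induction t with
  | zero => simp
  | succ n ih =>
    rw [← Equiv.sum_comp (Fin.consEquiv (fun _ => B)) fun h => ∏ k, σ (h k)]
    simp only [Fintype.sum_prod_type]
    have : ∀ (b : B) (h : Fin n → B),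
        (∏ k, σ (((Fin.consEquiv (fun _ => B)) (b, h)) k)) = σ b * ∏ k, σ (h k) := by
      intro b h
      rw [Fin.prod_univ_succ]
      rfl
    simp only [this]
    rw [← Finset.sum_mul_sum, hσ1, ih, mul_one]

/-- if the others play a minimax (punishment) strategy i.i.d. in
every round, then any history-dependent strategy of player i obtains a
normalized discounted expected payoff of at most the minimax value. -/
theorem repeated_punishment_caps_payoff
    (Ai B : Type) [Fintype Ai] [Nonempty Ai] [Fintype B] [Nonempty B]
    (u : Ai → B → ℝ)
    (σ : B → ℝ) (hσ0 : ∀ b, 0 ≤ σ b) (hσ1 : ∑ b, σ b = 1)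
    (mm : ℝ)
    (hmm : mm = sInf {x : ℝ | ∃ τ : B → ℝ, (∀ b, 0 ≤ τ b) ∧ (∑ b, τ b = 1) ∧
      x = Finset.univ.sup' Finset.univ_nonempty (fun a : Ai => ∑ b, τ b * u a b)})
    (hσmm : Finset.univ.sup' Finset.univ_nonempty (fun a : Ai => ∑ b, σ b * u a b) = mm)
    (δ : ℝ) (hδ0 : 0 < δ) (hδ1 : δ < 1)
    (s : (Σ t : ℕ, Fin t → B) → Ai) :
    δ * ∑' t : ℕ, (1 - δ) ^ t *
        ∑ h : Fin t → B, (∏ k, σ (h k)) * ∑ b, σ b * u (s ⟨t, h⟩) b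
      ≤ mm := by
  set g : (Σ t : ℕ, Fin t → B) → ℝ := fun h => ∑ b, σ b * u (s h) b with hg
  -- payoff per history bounded above by mm, below by the min
  have hub : ∀ h, g h ≤ mm := by
    intro h
    rw [← hσmm]
    exact Finset.le_sup' (fun a : Ai => ∑ b, σ b * u a b) (Finset.mem_univ (s h))
  set m : ℝ := Finset.univ.inf' Finset.univ_nonempty
      (fun a : Ai => ∑ b, σ b * u a b) with hm
  have hlb : ∀ h, m ≤ g h := by
    intro h
    exact Finset.inf'_le (fun a : Ai => ∑ b, σ b * u a b) (Finset.mem_univ (s h))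
  set P : ℕ → ℝ := fun t => ∑ h : Fin t → B, (∏ k, σ (h k)) * g ⟨t, h⟩ with hP
  have hw : ∀ t : ℕ, ∑ h : Fin t → B, ∏ k, σ (h k) = 1 := sum_prod_weights σ hσ1
  have hwnn : ∀ (t : ℕ) (h : Fin t → B), 0 ≤ ∏ k, σ (h k) := fun t h =>
    Finset.prod_nonneg fun k _ => hσ0 _
  have hPub : ∀ t, P t ≤ mm := by
    intro t
    calc P t ≤ ∑ h : Fin t → B, (∏ k, σ (h k)) * mm := by
          apply Finset.sum_le_sum
          intro h _
          exact mul_le_mul_of_nonneg_left (hub _) (hwnn t h)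
      _ = mm := by rw [← Finset.sum_mul, hw, one_mul]
  have hPlb : ∀ t, m ≤ P t := by
    intro t
    calc m = ∑ h : Fin t → B, (∏ k, σ (h k)) * m := by rw [← Finset.sum_mul, hw, one_mul]
      _ ≤ P t := by
          apply Finset.sum_le_sum
          intro h _
          exact mul_le_mul_of_nonneg_left (hlb _) (hwnn t h)
  have hr0 : (0:ℝ) ≤ 1 - δ := by linarith
  have hr1 : (1:ℝ) - δ < 1 := by linarith
  have hgeo : Summable fun t : ℕ => (1 - δ) ^ t := summable_geometric_of_lt_one hr0 hr1
  set C : ℝ := max |m| |mm| with hC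
  have habs : ∀ t, |P t| ≤ C := by
    intro t
    rcases abs_le.2 ⟨neg_abs_le m, le_abs_self m⟩ with _
    have h1 : P t ≤ C := le_trans (hPub t) (le_trans (le_abs_self mm) (le_max_right _ _))
    have h2 : -C ≤ P t := by
      have : -|m| ≤ m := neg_abs_le m
      have hC' : |m| ≤ C := le_max_left _ _
      linarith [hPlb t]
    exact abs_le.2 ⟨h2, h1⟩
  have hsumm : Summable fun t : ℕ => (1 - δ) ^ t * P t := by
    apply Summable.of_norm_bounded (g := fun t => (1 - δ) ^ t * C) (hgeo.mul_right C)
    intro t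
    rw [Real.norm_eq_abs, abs_mul, abs_pow, abs_of_nonneg hr0]
    exact mul_le_mul_of_nonneg_left (habs t) (pow_nonneg hr0 t)
  have hsumm2 : Summable fun t : ℕ => (1 - δ) ^ t * mm := hgeo.mul_right mm
  have hts : ∑' t : ℕ, (1 - δ) ^ t * P t ≤ ∑' t : ℕ, (1 - δ) ^ t * mm := by
    apply Summable.tsum_le_tsum _ hsumm hsumm2
    intro t
    exact mul_le_mul_of_nonneg_left (hPub t) (pow_nonneg hr0 t)
  have hgeoval : ∑' t : ℕ, (1 - δ) ^ t * mm = δ⁻¹ * mm := by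
    rw [tsum_mul_right, tsum_geometric_of_lt_one hr0 hr1]
    congr 1
    ring_nf
  calc δ * ∑' t : ℕ, (1 - δ) ^ t * P t ≤ δ * (δ⁻¹ * mm) := by
        apply mul_le_mul_of_nonneg_left _ (le_of_lt hδ0)
        rw [← hgeoval]; exact hts
    _ = mm := by field_simp
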